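/- Let n ≥ 1, H = (ℤ/nℤ)³ with the three coordinate subgroups H_1, H_2, H_3 (and set H_4 = H_1), and let G = H² ⋊ C_2 where the generator z of C_2 swaps the two factors of H. For i = 1,2,3 let S_i = {(a,b)z^j : a ∈ H_i \ {0}, b ∈ H_{i+1}, j ∈ {0,1}}. Then S_1, S_2, S_3 satisfy the triple product property in G. -/

import Mathlib

def rightQuotientSet {G : Type*} [Group G] (S : Set G) : Set G :=
  {q | ∃ s₁ ∈ S, ∃ s₂ ∈ S, q = s₁ * s₂⁻¹}

def TripleProductProperty {G : Type*} [Group G] (S₁ S₂ S₃ : Set G) : Prop :=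
  ∀ q₁ ∈ rightQuotientSet S₁, ∀ q₂ ∈ rightQuotientSet S₂, ∀ q₃ ∈ rightQuotientSet S₃,
    q₁ * q₂ * q₃ = 1 → q₁ = 1 ∧ q₂ = 1 ∧ q₃ = 1

/-- `H² = (ℤ/n)³ × (ℤ/n)³`, written multiplicatively, indexed by `ℤ/2`. -/
abbrev Hsq (n : ℕ) : Type := ZMod 2 → (Fin 3 → Multiplicative (ZMod n))

/-- The automorphism of `H²` given by cyclically shifting the two factors by `j`
(for `j = 1`, this swaps the two factors). -/
def shiftAut (n : ℕ) (j : ZMod 2) : MulAut (Hsq n) where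
  toFun h := fun i => h (i + j)
  invFun h := fun i => h (i - j)
  left_inv h := funext fun i => by simp
  right_inv h := funext fun i => by simp
  map_mul' h g := rfl

/-- The action of `C₂` on `H²` swapping the two factors. -/
def swapAction (n : ℕ) : Multiplicative (ZMod 2) →* MulAut (Hsq n) where
  toFun j := shiftAut n j.toAdd
  map_one' := by ext h i; simp [shiftAut]
  map_mul' j k := by ext h i; simp [shiftAut, add_assoc]

/-- The group `G = H² ⋊ C₂`. -/
abbrev Gn (n : ℕ) : Type := SemidirectProduct (Hsq n) (Multiplicative (ZMod 2)) (swapAction n)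

/-- `S_i` consists of the elements `(a,b)zʲ` with `a ∈ H_i \ {0}`, `b ∈ H_{i+1}`,
`j ∈ {0,1}` (here `H_i ⊆ (ℤ/n)³` is the `i`-th coordinate subgroup, and indices are
taken mod 3 so that `H_4 = H_1`). -/
def Sset (n : ℕ) (i : Fin 3) : Set (Gn n) :=
  {g | (∀ j : Fin 3, j ≠ i → g.left 0 j = 1) ∧ g.left 0 ≠ 1 ∧
       (∀ j : Fin 3, j ≠ i + 1 → g.left 1 j = 1)}

lemma tpp_quot_struct {n : ℕ} {i : Fin 3} {q : Gn n}
    (hq : q ∈ rightQuotientSet (Sset n i)) :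
    ∃ f f' : Hsq n,
      (∀ j : Fin 3, j ≠ i → f 0 j = 1) ∧ f 0 i ≠ 1 ∧ (∀ j, j ≠ i + 1 → f 1 j = 1) ∧
      (∀ j : Fin 3, j ≠ i → f' 0 j = 1) ∧ f' 0 i ≠ 1 ∧ (∀ j, j ≠ i + 1 → f' 1 j = 1) ∧
      (∀ k j, q.left k j = f k j * (f' (k + Multiplicative.toAdd q.right) j)⁻¹) := by
  obtain ⟨s, ⟨hs1, hs2, hs3⟩, s', ⟨hs1', hs2', hs3'⟩, rfl⟩ := hq
  refine ⟨s.left, s'.left, hs1, ?_, hs3, hs1', ?_, hs3', ?_⟩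
  · intro h; apply hs2; funext j
    by_cases hj : j = i
    · rw [hj]; exact h
    · exact hs1 j hj
  · intro h; apply hs2'; funext j
    by_cases hj : j = i
    · rw [hj]; exact h
    · exact hs1' j hj
  · intro k j
    simp only [SemidirectProduct.mul_left, SemidirectProduct.inv_left,
      SemidirectProduct.mul_right, SemidirectProduct.inv_right, map_inv,
      toAdd_mul, toAdd_inv]
    show s.left k j * _ = _
    simp [swapAction, shiftAut, Pi.mul_apply]
    show s'.left (k + Multiplicative.toAdd s.right - Multiplicative.toAdd s'.right) j = _
    rw [sub_eq_add_neg, ZMod.neg_eq_self_mod_two, add_assoc]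

/-- Structure of a quotient with trivial `z`-component. -/
lemma tpp_quotA {n : ℕ} {i : Fin 3} {q : Gn n}
    (hq : q ∈ rightQuotientSet (Sset n i))
    (hd : Multiplicative.toAdd q.right = 0) :
    (∀ j, j ≠ i → q.left 0 j = 1) ∧ (∀ j, j ≠ i + 1 → q.left 1 j = 1) := by
  obtain ⟨f, f', h1, h2, h3, h1', h2', h3', hL⟩ := tpp_quot_struct hq
  constructor
  · intro j hj
    rw [hL, hd]
    simp only [add_zero]
    rw [h1 j hj, h1' j hj]; simp
  · intro j hj
    rw [hL, hd]
    have : (1 : ZMod 2) + 0 = 1 := by decide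
    rw [this, h3 j hj, h3' j hj]; simp

/-- Structure of a quotient with nontrivial `z`-component. -/
lemma tpp_quotB {n : ℕ} {i : Fin 3} {q : Gn n}
    (hq : q ∈ rightQuotientSet (Sset n i))
    (hd : Multiplicative.toAdd q.right = 1) :
    (∀ k j, j ≠ i → j ≠ i + 1 → q.left k j = 1) ∧
      q.left 0 i ≠ 1 ∧ q.left 1 i ≠ 1 := by
  obtain ⟨f, f', h1, h2, h3, h1', h2', h3', hL⟩ := tpp_quot_struct hq
  have hii : i ≠ i + 1 := by fin_cases i <;> decide
  have h01 : (0 : ZMod 2) + 1 = 1 := by decide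
  have h11 : (1 : ZMod 2) + 1 = 0 := by decide
  refine ⟨?_, ?_, ?_⟩
  · intro k j hj hj'
    rw [hL, hd]
    have hk := (by decide : ∀ x : ZMod 2, x = 0 ∨ x = 1) k
    rcases hk with rfl | rfl
    · rw [h01, h1 j hj, h3' j hj']; simp
    · rw [h11, h3 j hj', h1' j hj]; simp
  · rw [hL, hd, h01, h3' i hii]; simpa using h2
  · rw [hL, hd, h11, h3 i hii]; simpa using h2'

lemma tpp_prod_eval {n : ℕ} {q₁ q₂ q₃ : Gn n} (h : q₁ * q₂ * q₃ = 1) :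
    (∀ k j, q₁.left k j * q₂.left (k + Multiplicative.toAdd q₁.right) j *
        q₃.left (k + Multiplicative.toAdd q₁.right + Multiplicative.toAdd q₂.right) j = 1) ∧
      Multiplicative.toAdd q₁.right + Multiplicative.toAdd q₂.right +
        Multiplicative.toAdd q₃.right = 0 := by
  constructor
  · intro k j
    have hL := congrArg SemidirectProduct.left h
    have := congrFun (congrFun hL k) j
    simp only [SemidirectProduct.mul_left, SemidirectProduct.mul_right,
      SemidirectProduct.one_left, toAdd_mul] at this ⊢
    simp only [Pi.mul_apply, Pi.one_apply, swapAction, shiftAut, toAdd_mul,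
      MonoidHom.coe_mk, OneHom.coe_mk, MulEquiv.coe_mk, Equiv.coe_fn_mk] at this
    rw [add_assoc]
    exact this
  · have hR := congrArg SemidirectProduct.right h
    simp only [SemidirectProduct.mul_right, SemidirectProduct.one_right] at hR
    have := congrArg Multiplicative.toAdd hR
    simpa [toAdd_mul] using this

lemma Gn_eq_one {n : ℕ} {q : Gn n} (hl : q.left = 1) (hr : q.right = 1) : q = 1 := by
  cases q with
  | mk l r => cases hl; cases hr; rfl

lemma Gn_right_one {n : ℕ} {q : Gn n} (h : Multiplicative.toAdd q.right = 0) :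
    q.right = 1 := by
  simpa using congrArg Multiplicative.ofAdd h

theorem stmt_4 (n : ℕ) (hn : 1 ≤ n) :
    TripleProductProperty (Sset n 0) (Sset n 1) (Sset n 2) := by
  intro q₁ hq₁ q₂ hq₂ q₃ hq₃ heq
  obtain ⟨hE, hD⟩ := tpp_prod_eval heq
  have hcase := (by decide : ∀ x : ZMod 2, x = 0 ∨ x = 1)
  rcases hcase (Multiplicative.toAdd q₁.right) with h1 | h1 <;>
    rcases hcase (Multiplicative.toAdd q₂.right) with h2 | h2 <;>
    rcases hcase (Multiplicative.toAdd q₃.right) with h3 | h3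
  · -- (0,0,0)
    simp only [h1, h2, add_zero] at hE
    obtain ⟨A1l, A1r⟩ := tpp_quotA hq₁ h1
    obtain ⟨A2l, A2r⟩ := tpp_quotA hq₂ h2
    obtain ⟨A3l, A3r⟩ := tpp_quotA hq₃ h3
    have e1 : q₁.left 0 0 = 1 := by
      have := hE 0 0
      rw [A2l 0 (by decide), A3l 0 (by decide)] at this; simpa using this
    have e1' : q₁.left 1 1 = 1 := by
      have := hE 1 1
      rw [A2r 1 (by decide), A3r 1 (by decide)] at this; simpa using this
    have e2 : q₂.left 0 1 = 1 := by
      have := hE 0 1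
      rw [A1l 1 (by decide), A3l 1 (by decide)] at this; simpa using this
    have e2' : q₂.left 1 2 = 1 := by
      have := hE 1 2
      rw [A1r 2 (by decide), A3r 2 (by decide)] at this; simpa using this
    have e3 : q₃.left 0 2 = 1 := by
      have := hE 0 2
      rw [A1l 2 (by decide), A2l 2 (by decide)] at this; simpa using this
    have e3' : q₃.left 1 0 = 1 := by
      have := hE 1 0
      rw [A1r 0 (by decide), A2r 0 (by decide)] at this; simpa using this
    have L1 : q₁.left = 1 := by
      funext k j
      rcases hcase k with rfl | rfl <;> fin_cases j <;>
        simp only [Pi.one_apply] <;>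
        first
          | exact e1 | exact e1'
          | exact A1l _ (by decide) | exact A1r _ (by decide)
    have L2 : q₂.left = 1 := by
      funext k j
      rcases hcase k with rfl | rfl <;> fin_cases j <;>
        simp only [Pi.one_apply] <;>
        first
          | exact e2 | exact e2'
          | exact A2l _ (by decide) | exact A2r _ (by decide)
    have L3 : q₃.left = 1 := by
      funext k j
      rcases hcase k with rfl | rfl <;> fin_cases j <;>
        simp only [Pi.one_apply] <;>
        first
          | exact e3 | exact e3'
          | exact A3l _ (by decide) | exact A3r _ (by decide)
    exact ⟨Gn_eq_one L1 (Gn_right_one h1), Gn_eq_one L2 (Gn_right_one h2),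
      Gn_eq_one L3 (Gn_right_one h3)⟩
  · -- (0,0,1)
    rw [h1, h2, h3] at hD; exact absurd hD (by decide)
  · -- (0,1,0)
    rw [h1, h2, h3] at hD; exact absurd hD (by decide)
  · -- (0,1,1)
    exfalso
    obtain ⟨A1l, A1r⟩ := tpp_quotA hq₁ h1
    obtain ⟨B2l, B2a, B2b⟩ := tpp_quotB hq₂ h2
    obtain ⟨B3l, B3a, B3b⟩ := tpp_quotB hq₃ h3
    have := hE 0 1
    rw [h1, h2] at this
    simp only [add_zero, zero_add] at this
    rw [A1l 1 (by decide), B3l 1 1 (by decide) (by decide)] at this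
    exact B2a (by simpa using this)
  · -- (1,0,0)
    rw [h1, h2, h3] at hD; exact absurd hD (by decide)
  · -- (1,0,1)
    exfalso
    obtain ⟨B1l, B1a, B1b⟩ := tpp_quotB hq₁ h1
    obtain ⟨A2l, A2r⟩ := tpp_quotA hq₂ h2
    obtain ⟨B3l, B3a, B3b⟩ := tpp_quotB hq₃ h3
    have := hE 1 2
    rw [h1, h2] at this
    simp only [add_zero, show (1 : ZMod 2) + 1 = 0 from by decide] at this
    rw [B1l 1 2 (by decide) (by decide), A2l 2 (by decide)] at this
    exact B3a (by simpa using this)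
  · -- (1,1,0)
    exfalso
    obtain ⟨B1l, B1a, B1b⟩ := tpp_quotB hq₁ h1
    obtain ⟨B2l, B2a, B2b⟩ := tpp_quotB hq₂ h2
    obtain ⟨A3l, A3r⟩ := tpp_quotA hq₃ h3
    have := hE 0 0
    rw [h1, h2] at this
    simp only [zero_add, show (1 : ZMod 2) + 1 = 0 from by decide] at this
    rw [B2l 1 0 (by decide) (by decide), A3l 0 (by decide)] at this
    exact B1a (by simpa using this)
  · -- (1,1,1)
    rw [h1, h2, h3] at hD; exact absurd hD (by decide)
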